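/- Let y = Xβ + z with X ∈ ℝ^{n×p} a deterministic full-rank matrix with unit-norm columns, z ~ N(0, σ²I_n), and fix λ > 0. Let X̃ be a one-at-a-time knockoff matrix, β̂_λ = Σ_λ^{-1}Xᵀy, and β̃_λ = β̂_λ + diag{Σ_λ^{-1}}(X̃ − X)ᵀy. If j is a null feature (β_j = 0), then the pair (β̂_{λ,j}, β̃_{λ,j}) is exchangeable: (β̂_{λ,j}, β̃_{λ,j}) has the same joint distribution as (β̃_{λ,j}, β̂_{λ,j}). -/

import Mathlib

open MeasureTheory ProbabilityTheory Matrix Real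
open scoped NNReal ENNReal

noncomputable section

/-- Ridge Gram matrix `Σ_λ = XᵀX + λ I_p`. -/
def SigL {n p : ℕ} (X : Matrix (Fin n) (Fin p) ℝ) (l : ℝ) : Matrix (Fin p) (Fin p) ℝ :=
  Xᵀ * X + l • (1 : Matrix (Fin p) (Fin p) ℝ)

/-- `D = diag{Σ_λ⁻¹}`, the diagonal matrix with entries `[Σ_λ⁻¹]_{jj}`. -/
def Dmat {n p : ℕ} (X : Matrix (Fin n) (Fin p) ℝ) (l : ℝ) : Matrix (Fin p) (Fin p) ℝ :=
  Matrix.diagonal (fun j => (SigL X l)⁻¹ j j)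

/-- Ridge estimator `β̂_λ = Σ_λ⁻¹ Xᵀ y`. -/
def betaHat {n p : ℕ} (X : Matrix (Fin n) (Fin p) ℝ) (l : ℝ) (y : Fin n → ℝ) : Fin p → ℝ :=
  ((SigL X l)⁻¹ * Xᵀ).mulVec y

/-- One-at-a-time knockoff coefficients `β̃_λ = β̂_λ + diag{Σ_λ⁻¹}(X̃ - X)ᵀ y`. -/
def betaTilde {n p : ℕ} (X Xt : Matrix (Fin n) (Fin p) ℝ) (l : ℝ) (y : Fin n → ℝ) :
    Fin p → ℝ :=
  betaHat X l y + (Dmat X l * (Xt - X)ᵀ).mulVec y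


lemma lintegral_fin_prod (n : ℕ) (f : Fin n → ℝ → ℝ≥0∞) (hf : ∀ i, Measurable (f i)) :
    ∫⁻ x : Fin n → ℝ, ∏ i, f i (x i) = ∏ i, ∫⁻ t, f i t := by
  induction n with
  | zero => simp [MeasureTheory.volume_pi, MeasureTheory.Measure.pi_univ]
  | succ n ih =>
    have hmp := (measurePreserving_piFinSuccAbove (fun _ : Fin (n+1) => (volume : Measure ℝ)) 0).symm
    calc ∫⁻ x : Fin (n+1) → ℝ, ∏ i, f i (x i)
        = ∫⁻ p : ℝ × (Fin n → ℝ), f 0 p.1 * ∏ i : Fin n, f i.succ (p.2 i) := by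
          rw [volume_pi, ← hmp.lintegral_comp (by
            exact Finset.measurable_prod _ (fun i _ => (hf i).comp (measurable_pi_apply i)))]
          refine lintegral_congr fun p => ?_
          simp_rw [MeasurableEquiv.piFinSuccAbove_symm_apply, Fin.insertNthEquiv,
            Equiv.coe_fn_mk, Fin.insertNth_zero, Fin.prod_univ_succ, Fin.cons_zero, Fin.cons_succ]
          rfl
      _ = (∫⁻ t, f 0 t) * ∏ i : Fin n, ∫⁻ t, f i.succ t := by
          rw [← ih (fun i => f i.succ) (fun i => hf i.succ), ← lintegral_prod_mul
            ((hf 0).aemeasurable) ((Finset.measurable_prod _ (fun i _ => (hf i.succ).comp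
              (measurable_pi_apply i))).aemeasurable)]
          rw [Measure.volume_eq_prod, volume_pi]
      _ = ∏ i, ∫⁻ t, f i t := (Fin.prod_univ_succ (fun i => ∫⁻ t, f i t)).symm

lemma lintegral_fin_prod_box (n : ℕ) (f : Fin n → ℝ → ℝ≥0∞) (hf : ∀ i, Measurable (f i))
    (s : Fin n → Set ℝ) (hs : ∀ i, MeasurableSet (s i)) :
    ∫⁻ x : Fin n → ℝ in Set.univ.pi s, ∏ i, f i (x i) = ∏ i, ∫⁻ t in s i, f i t := by
  have key : ∀ x : Fin n → ℝ, (Set.univ.pi s).indicator (fun x => ∏ i, f i (x i)) x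
      = ∏ i, (s i).indicator (f i) (x i) := by
    intro x
    by_cases hx : x ∈ Set.univ.pi s
    · rw [Set.indicator_of_mem hx]
      exact Finset.prod_congr rfl fun i _ =>
        (Set.indicator_of_mem (hx i (Set.mem_univ i)) _).symm
    · rw [Set.indicator_of_notMem hx]
      obtain ⟨i, hi⟩ : ∃ i, x i ∉ s i := by simpa [Set.mem_pi] using hx
      exact (Finset.prod_eq_zero (Finset.mem_univ i) (Set.indicator_of_notMem hi _)).symm
  have hlem : ∫⁻ x : Fin n → ℝ, ∏ i, (s i).indicator (f i) (x i)
      = ∏ i, ∫⁻ t, (s i).indicator (f i) t :=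
    lintegral_fin_prod n _ (fun i => (hf i).indicator (hs i))
  rw [← lintegral_indicator (MeasurableSet.univ_pi hs)]
  simp_rw [key]
  rw [hlem]
  exact Finset.prod_congr rfl fun i _ => by rw [lintegral_indicator (hs i)]

lemma pi_gaussian_eq_withDensity (n : ℕ) (σ2 : ℝ≥0) (h : σ2 ≠ 0) :
    Measure.pi (fun _ : Fin n => gaussianReal 0 σ2)
      = volume.withDensity (fun x => ∏ i, gaussianPDF 0 σ2 (x i)) := by
  refine Measure.pi_eq fun s hs => ?_
  rw [withDensity_apply _ (MeasurableSet.univ_pi hs),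
    lintegral_fin_prod_box n _ (fun _ => measurable_gaussianPDF 0 σ2) s hs]
  exact Finset.prod_congr rfl fun i _ => (gaussianReal_apply 0 h (s i)).symm

lemma pi_dirac_zero (n : ℕ) :
    Measure.pi (fun _ : Fin n => Measure.dirac (0:ℝ)) = Measure.dirac (0 : Fin n → ℝ) := by
  refine Measure.pi_eq fun s hs => ?_
  rw [Measure.dirac_apply' _ (MeasurableSet.univ_pi hs)]
  by_cases hx : (0 : Fin n → ℝ) ∈ Set.univ.pi s
  · rw [Set.indicator_of_mem hx, Pi.one_apply]
    symm
    refine Finset.prod_eq_one fun i _ => ?_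
    have h0 : (0:ℝ) ∈ s i := hx i (Set.mem_univ i)
    rw [Measure.dirac_apply' _ (hs i), Set.indicator_of_mem h0, Pi.one_apply]
  · rw [Set.indicator_of_notMem hx]
    obtain ⟨i, hi⟩ : ∃ i, (0 : Fin n → ℝ) i ∉ s i := by simpa [Set.mem_pi] using hx
    symm
    refine Finset.prod_eq_zero (Finset.mem_univ i) ?_
    have h0 : (0:ℝ) ∉ s i := hi
    rw [Measure.dirac_apply' _ (hs i), Set.indicator_of_notMem h0]

lemma map_withDensity_equiv {α : Type*} [MeasurableSpace α] (μ : Measure α) (e : α ≃ᵐ α)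
    (f : α → ℝ≥0∞) (hf : Measurable f) :
    (μ.withDensity f).map e = (μ.map e).withDensity (f ∘ e.symm) := by
  ext s hs
  rw [Measure.map_apply e.measurable hs,
    withDensity_apply _ (e.measurable hs),
    withDensity_apply _ hs,
    setLIntegral_map hs (hf.comp e.symm.measurable) e.measurable]
  refine setLIntegral_congr_fun (e.measurable hs) (fun x _ => ?_)
  simp

lemma measurable_mulVec' {n : ℕ} (R : Matrix (Fin n) (Fin n) ℝ) : Measurable R.mulVec := by
  have : Continuous (R.mulVecLin : (Fin n → ℝ) →ₗ[ℝ] (Fin n → ℝ)) :=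
    LinearMap.continuous_on_pi _
  exact this.measurable

def orthEquiv {n : ℕ} (R : Matrix (Fin n) (Fin n) ℝ) (h1 : Rᵀ * R = 1) :
    (Fin n → ℝ) ≃ᵐ (Fin n → ℝ) where
  toFun := R.mulVec
  invFun := Rᵀ.mulVec
  left_inv x := by rw [Matrix.mulVec_mulVec, h1, Matrix.one_mulVec]
  right_inv x := by rw [Matrix.mulVec_mulVec, mul_eq_one_comm.mp h1, Matrix.one_mulVec]
  measurable_toFun := measurable_mulVec' R
  measurable_invFun := measurable_mulVec' Rᵀ

lemma volume_map_orth {n : ℕ} (R : Matrix (Fin n) (Fin n) ℝ) (h1 : Rᵀ * R = 1) :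
    (volume : Measure (Fin n → ℝ)).map R.mulVec = volume := by
  have h2 : R.det * R.det = 1 := by
    have := congrArg Matrix.det h1
    rwa [Matrix.det_mul, Matrix.det_transpose, Matrix.det_one] at this
  have habs : |R.det| = 1 := by nlinarith [abs_nonneg R.det, abs_mul_abs_self R.det]
  have hdet : R.det ≠ 0 := by intro h; rw [h, mul_zero] at h2; norm_num at h2
  have hmap := Real.map_matrix_volume_pi_eq_smul_volume_pi (M := R) hdet
  rw [show ⇑(Matrix.toLin' R) = R.mulVec from funext fun v => Matrix.toLin'_apply R v] at hmap
  rw [hmap, abs_inv, habs]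
  simp

lemma mulVec_dot_self {n : ℕ} (M : Matrix (Fin n) (Fin n) ℝ) (hM : Mᵀ * M = 1)
    (x : Fin n → ℝ) : M.mulVec x ⬝ᵥ M.mulVec x = x ⬝ᵥ x := by
  rw [Matrix.dotProduct_mulVec, ← Matrix.mulVec_transpose, Matrix.mulVec_mulVec, hM,
    Matrix.one_mulVec]

lemma prod_gaussianPDF_comp {n : ℕ} (σ2 : ℝ≥0) (M : Matrix (Fin n) (Fin n) ℝ)
    (hM : Mᵀ * M = 1) (x : Fin n → ℝ) :
    ∏ i, gaussianPDF 0 σ2 (M.mulVec x i) = ∏ i, gaussianPDF 0 σ2 (x i) := by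
  have key : ∀ t : Fin n → ℝ, ∏ i, gaussianPDF 0 σ2 (t i)
      = ENNReal.ofReal ((Real.sqrt (2 * π * σ2))⁻¹ ^ n * Real.exp (-(t ⬝ᵥ t) / (2 * σ2))) := by
    intro t
    simp only [gaussianPDF]
    rw [← ENNReal.ofReal_prod_of_nonneg (fun i _ => gaussianPDFReal_nonneg 0 σ2 (t i))]
    congr 1
    simp only [gaussianPDFReal, sub_zero]
    rw [Finset.prod_mul_distrib, Finset.prod_const, ← Real.exp_sum]
    congr 2
    · simp
    · rw [dotProduct, ← Finset.sum_div]
      congr 1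
      rw [← Finset.sum_neg_distrib]
      exact Finset.sum_congr rfl fun i _ => by ring
  rw [key, key, mulVec_dot_self M hM x]
lemma pi_gaussian_map_orth {n : ℕ} (σ2 : ℝ≥0) (R : Matrix (Fin n) (Fin n) ℝ)
    (h1 : Rᵀ * R = 1) :
    (Measure.pi fun _ : Fin n => gaussianReal 0 σ2).map R.mulVec
      = Measure.pi fun _ : Fin n => gaussianReal 0 σ2 := by
  by_cases hσ : σ2 = 0
  · subst hσ
    simp_rw [gaussianReal_zero_var, pi_dirac_zero n,
      Measure.map_dirac' (measurable_mulVec' R), Matrix.mulVec_zero]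
  · rw [pi_gaussian_eq_withDensity n σ2 hσ,
      show R.mulVec = ⇑(orthEquiv R h1) from rfl,
      map_withDensity_equiv volume (orthEquiv R h1)
        (fun x => ∏ i, gaussianPDF 0 σ2 (x i))
        (by exact Finset.measurable_prod _ fun i _ =>
          (measurable_gaussianPDF 0 σ2).comp (measurable_pi_apply i)),
      show (⇑(orthEquiv R h1) : (Fin n → ℝ) → (Fin n → ℝ)) = R.mulVec from rfl,
      volume_map_orth R h1]
    congr 1
    funext x
    have h2 : (Rᵀ)ᵀ * Rᵀ = 1 := by
      rw [Matrix.transpose_transpose]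
      exact mul_eq_one_comm.mp h1
    have : (orthEquiv R h1).symm x = Rᵀ.mulVec x := rfl
    simp only [Function.comp_apply, this]
    exact prod_gaussianPDF_comp σ2 Rᵀ h2 x
lemma map_z_eq_pi {Ω : Type} [MeasurableSpace Ω] (P : Measure Ω) [IsProbabilityMeasure P]
    {n : ℕ} (σ2 : ℝ≥0) (z : Ω → Fin n → ℝ) (hzmeas : ∀ i, Measurable fun ω => z ω i)
    (hzdist : ∀ i, P.map (fun ω => z ω i) = gaussianReal 0 σ2)
    (hzindep : iIndepFun (fun i ω => z ω i) P) :
    P.map z = Measure.pi fun _ : Fin n => gaussianReal 0 σ2 := by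
  have hz : Measurable z := measurable_pi_iff.mpr hzmeas
  refine (Measure.pi_eq fun s hs => ?_).symm
  rw [Measure.map_apply hz (MeasurableSet.univ_pi hs)]
  have hpre : z ⁻¹' Set.univ.pi s = ⋂ i ∈ Finset.univ, (fun ω => z ω i) ⁻¹' s i := by
    ext ω; simp [Set.mem_pi]
  rw [hpre, (iIndepFun_iff_measure_inter_preimage_eq_mul.mp hzindep) Finset.univ
    (fun i _ => hs i)]
  refine Finset.prod_congr rfl fun i _ => ?_
  rw [← Measure.map_apply (hzmeas i) (hs i), hzdist i]
lemma vecMulVec_mulVec' {n : ℕ} (w x : Fin n → ℝ) :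
    (Matrix.vecMulVec w w).mulVec x = (w ⬝ᵥ x) • w := by
  funext i
  simp only [Matrix.mulVec, Matrix.vecMulVec_apply, dotProduct, Pi.smul_apply,
    smul_eq_mul, Finset.sum_mul]
  exact Finset.sum_congr rfl fun k _ => by ring

lemma vecMulVec_mul_self {n : ℕ} (w : Fin n → ℝ) :
    (Matrix.vecMulVec w w) * (Matrix.vecMulVec w w) = (w ⬝ᵥ w) • Matrix.vecMulVec w w := by
  ext i k
  simp only [Matrix.mul_apply, Matrix.vecMulVec_apply, Matrix.smul_apply, smul_eq_mul,
    dotProduct]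
  rw [Finset.sum_mul]
  exact Finset.sum_congr rfl fun k' _ => by ring

lemma vecMulVec_self_transpose {n : ℕ} (w : Fin n → ℝ) :
    (Matrix.vecMulVec w w)ᵀ = Matrix.vecMulVec w w := by
  ext i k
  simp only [Matrix.transpose_apply, Matrix.vecMulVec_apply]
  ring

/-- The reflection matrix across the hyperplane orthogonal to `w`. -/
def reflMat {n : ℕ} (w : Fin n → ℝ) : Matrix (Fin n) (Fin n) ℝ :=
  1 - (2 / (w ⬝ᵥ w)) • Matrix.vecMulVec w w

lemma reflMat_transpose {n : ℕ} (w : Fin n → ℝ) : (reflMat w)ᵀ = reflMat w := by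
  simp [reflMat, Matrix.transpose_sub, Matrix.transpose_smul, vecMulVec_self_transpose]

lemma reflMat_orth {n : ℕ} (w : Fin n → ℝ) (hw : w ⬝ᵥ w ≠ 0) :
    (reflMat w)ᵀ * reflMat w = 1 := by
  rw [reflMat_transpose]
  set c : ℝ := 2 / (w ⬝ᵥ w) with hc
  set t : Matrix (Fin n) (Fin n) ℝ := c • Matrix.vecMulVec w w with ht
  have htt : t * t = t + t := by
    rw [ht, Matrix.smul_mul, Matrix.mul_smul, vecMulVec_mul_self, smul_smul, smul_smul]
    rw [← add_smul]
    congr 1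
    rw [hc]
    field_simp
    ring
  show (1 - t) * (1 - t) = 1
  calc (1 - t) * (1 - t) = 1 - t - t + t * t := by noncomm_ring
    _ = 1 := by rw [htt]; abel

lemma reflMat_mulVec {n : ℕ} (w x : Fin n → ℝ) :
    (reflMat w).mulVec x = x - ((2 / (w ⬝ᵥ w)) * (w ⬝ᵥ x)) • w := by
  rw [reflMat, Matrix.sub_mulVec, Matrix.one_mulVec, Matrix.smul_mulVec,
    vecMulVec_mulVec', smul_smul]

/-- Corollary 2.1: for a null feature `j` (i.e. `β j = 0`), the pair
`(β̂_{λ,j}, β̃_{λ,j})` is exchangeable: it has the same joint distribution as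
`(β̃_{λ,j}, β̂_{λ,j})`. -/
theorem stmt_1
    {Ω : Type} [MeasurableSpace Ω] (P : Measure Ω) [IsProbabilityMeasure P]
    (n p : ℕ) (hnp : p ≤ n)
    (X : Matrix (Fin n) (Fin p) ℝ) (hrank : X.rank = p)
    (hcols : ∀ j, Xᵀ j ⬝ᵥ Xᵀ j = 1)
    (β : Fin p → ℝ) (σ2 : ℝ≥0)
    (z : Ω → Fin n → ℝ)
    (hzmeas : ∀ i, Measurable fun ω => z ω i)
    (hzdist : ∀ i, P.map (fun ω => z ω i) = gaussianReal 0 σ2)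
    (hzindep : iIndepFun (fun i ω => z ω i) P)
    (l : ℝ) (hl : 0 < l)
    (s : Fin p → ℝ) (hs : ∀ j, 0 ≤ s j)
    (Xt : Matrix (Fin n) (Fin p) ℝ)
    (hkn1 : Xtᵀ * X = Xᵀ * X - Matrix.diagonal s)
    (hkn2 : ∀ j, Xtᵀ j ⬝ᵥ Xtᵀ j = 1)
    (y : Ω → Fin n → ℝ) (hy : ∀ ω, y ω = X.mulVec β + z ω)
    (j : Fin p) (hnull : β j = 0) :
    P.map (fun ω => (betaHat X l (y ω) j, betaTilde X Xt l (y ω) j))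
      = P.map (fun ω => (betaTilde X Xt l (y ω) j, betaHat X l (y ω) j)) := by
  classical
  set u : Fin n → ℝ := ((SigL X l)⁻¹ * Xᵀ) j with hu
  set d : ℝ := (SigL X l)⁻¹ j j with hd
  set a : Fin n → ℝ := (Xt - X)ᵀ j with ha
  set w : Fin n → ℝ := d • a with hwdef
  set v : Fin n → ℝ := u + w with hv
  set m : ℝ := u ⬝ᵥ X.mulVec β with hm
  -- basic matrix identities
  have hXtX : Xᵀ * Xt = Xᵀ * X - Matrix.diagonal s := by
    have h := congrArg Matrix.transpose hkn1
    rwa [Matrix.transpose_mul, Matrix.transpose_sub, Matrix.transpose_mul,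
      Matrix.transpose_transpose, Matrix.diagonal_transpose] at h
  have hXaX : Xᵀ * (Xt - X) = -Matrix.diagonal s := by
    rw [Matrix.mul_sub, hXtX]
    abel
  -- the mean of the w-part vanishes
  have hmean0 : a ⬝ᵥ X.mulVec β = 0 := by
    have h1 : a ⬝ᵥ X.mulVec β = (((Xt - X)ᵀ * X).mulVec β) j := by
      rw [← Matrix.mulVec_mulVec]
      rfl
    have h2 : (Xt - X)ᵀ * X = -Matrix.diagonal s := by
      have h := congrArg Matrix.transpose hXaX
      rwa [Matrix.transpose_mul, Matrix.transpose_transpose, Matrix.transpose_neg,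
        Matrix.diagonal_transpose] at h
    rw [h1, h2, Matrix.neg_mulVec, Pi.neg_apply, Matrix.mulVec_diagonal, hnull, mul_zero, neg_zero]
  have hwm : w ⬝ᵥ X.mulVec β = 0 := by
    rw [hwdef, smul_dotProduct, hmean0, smul_zero]
  -- norm computations
  have hua : u ⬝ᵥ a = -(d * s j) := by
    have h1 : u ⬝ᵥ a = (((SigL X l)⁻¹ * Xᵀ) * (Xt - X)) j j := by
      rw [Matrix.mul_apply]
      rfl
    have h2 : ((SigL X l)⁻¹ * Xᵀ) * (Xt - X) = (SigL X l)⁻¹ * (-Matrix.diagonal s) := by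
      rw [Matrix.mul_assoc, hXaX]
    rw [h1, h2, Matrix.mul_neg, Matrix.neg_apply, Matrix.mul_diagonal]
  have hXtXjj : Xtᵀ j ⬝ᵥ Xᵀ j = 1 - s j := by
    have h1 : Xtᵀ j ⬝ᵥ Xᵀ j = (Xtᵀ * X) j j := by
      rw [Matrix.mul_apply]
      rfl
    have h2 : (Xᵀ * X) j j = 1 := by
      have : (Xᵀ * X) j j = Xᵀ j ⬝ᵥ Xᵀ j := by
        rw [Matrix.mul_apply]
        rfl
      rw [this, hcols j]
    rw [h1, hkn1, Matrix.sub_apply, Matrix.diagonal_apply_eq, h2]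
  have haa : a ⬝ᵥ a = 2 * s j := by
    have ha' : a = Xtᵀ j - Xᵀ j := by
      funext i
      simp [ha, Matrix.transpose_apply, Matrix.sub_apply]
    rw [ha', sub_dotProduct, dotProduct_sub, dotProduct_sub, hkn2 j, hcols j,
      dotProduct_comm (Xᵀ j) (Xtᵀ j), hXtXjj]
    ring
  have hww : w ⬝ᵥ w = d ^ 2 * (2 * s j) := by
    rw [hwdef, smul_dotProduct, dotProduct_smul, haa, smul_eq_mul, smul_eq_mul]
    ring
  have huw : u ⬝ᵥ w = -(d ^ 2 * s j) := by
    rw [hwdef, dotProduct_smul, hua, smul_eq_mul]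
    ring
  -- pointwise formulas for the estimators
  have hbh : ∀ ω, betaHat X l (y ω) j = m + u ⬝ᵥ z ω := by
    intro ω
    have h0 : betaHat X l (y ω) j = u ⬝ᵥ y ω := rfl
    rw [h0, hy ω, dotProduct_add, hm]
  have hbt : ∀ ω, betaTilde X Xt l (y ω) j = m + v ⬝ᵥ z ω := by
    intro ω
    have h0 : betaTilde X Xt l (y ω) j
        = betaHat X l (y ω) j + (Dmat X l * (Xt - X)ᵀ) j ⬝ᵥ y ω := rfl
    have hrow : (Dmat X l * (Xt - X)ᵀ) j = w := by
      funext i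
      show (Matrix.diagonal (fun j => (SigL X l)⁻¹ j j) * (Xt - X)ᵀ) j i = (d • a) i
      rw [Matrix.diagonal_mul]
      simp [hd, ha]
    rw [h0, hrow, hbh ω, hy ω, dotProduct_add, hwm, zero_add, hv, add_dotProduct]
    ring
  -- measure-theoretic part
  set πσ : Measure (Fin n → ℝ) := Measure.pi fun _ : Fin n => gaussianReal 0 σ2 with hπσ
  have hz : Measurable z := measurable_pi_iff.mpr hzmeas
  have hmapz : P.map z = πσ := map_z_eq_pi P σ2 z hzmeas hzdist hzindep
  have hdotmeas : ∀ c : Fin n → ℝ, Measurable fun x : Fin n → ℝ => c ⬝ᵥ x := by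
    intro c
    exact Finset.measurable_sum _ fun i _ => (measurable_pi_apply i : Measurable fun x : Fin n → ℝ => x i).const_mul (c i)
  set g : (Fin n → ℝ) → ℝ × ℝ := fun x => (m + u ⬝ᵥ x, m + v ⬝ᵥ x) with hgdef
  set g' : (Fin n → ℝ) → ℝ × ℝ := fun x => (m + v ⬝ᵥ x, m + u ⬝ᵥ x) with hg'def
  have hgmeas : Measurable g :=
    (measurable_const.add (hdotmeas u)).prodMk (measurable_const.add (hdotmeas v))
  have hg'meas : Measurable g' :=
    (measurable_const.add (hdotmeas v)).prodMk (measurable_const.add (hdotmeas u))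
  have key : πσ.map g = πσ.map g' := by
    by_cases hcase : w = 0
    · have hvu : v = u := by rw [hv, hcase, add_zero]
      rw [hgdef, hg'def, hvu]
    · have hwne : w ⬝ᵥ w ≠ 0 := by
        intro h0
        exact hcase (dotProduct_self_eq_zero.mp h0)
      set R : Matrix (Fin n) (Fin n) ℝ := reflMat w with hR
      have horth : Rᵀ * R = 1 := reflMat_orth w hwne
      have hdotR : ∀ cvec : Fin n → ℝ, ∀ x, cvec ⬝ᵥ R.mulVec x = R.mulVec cvec ⬝ᵥ x := by
        intro cvec x
        rw [Matrix.dotProduct_mulVec, ← Matrix.mulVec_transpose, hR, reflMat_transpose]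
      have hRu : R.mulVec u = v := by
        rw [hR, reflMat_mulVec]
        have h1 : w ⬝ᵥ u = -((w ⬝ᵥ w) / 2) := by
          rw [dotProduct_comm, huw, hww]
          ring
        have h2 : 2 / (w ⬝ᵥ w) * (w ⬝ᵥ u) = -1 := by
          rw [h1]
          field_simp
        rw [h2, neg_one_smul, sub_neg_eq_add, hv]
      have hRv : R.mulVec v = u := by
        rw [hR, reflMat_mulVec]
        have h1 : w ⬝ᵥ v = (w ⬝ᵥ w) / 2 := by
          rw [hv, dotProduct_add, dotProduct_comm w u, huw, hww]
          ring
        have h2 : 2 / (w ⬝ᵥ w) * (w ⬝ᵥ v) = 1 := by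
          rw [h1]
          field_simp
        rw [h2, one_smul, hv, add_sub_cancel_right]
      have hieq : g ∘ R.mulVec = g' := by
        funext x
        simp only [Function.comp_apply, hgdef, hg'def, hdotR u x, hdotR v x, hRu, hRv]
      calc πσ.map g = (πσ.map R.mulVec).map g := by
            rw [hπσ, pi_gaussian_map_orth σ2 R horth]
        _ = πσ.map (g ∘ R.mulVec) := Measure.map_map hgmeas (measurable_mulVec' R)
        _ = πσ.map g' := by rw [hieq]
  have h1 : (fun ω => (betaHat X l (y ω) j, betaTilde X Xt l (y ω) j)) = g ∘ z := by
    funext ω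
    simp only [Function.comp_apply, hgdef, hbh ω, hbt ω]
  have h2 : (fun ω => (betaTilde X Xt l (y ω) j, betaHat X l (y ω) j)) = g' ∘ z := by
    funext ω
    simp only [Function.comp_apply, hg'def, hbh ω, hbt ω]
  rw [h1, h2, ← Measure.map_map hgmeas hz, ← Measure.map_map hg'meas hz, hmapz, key]

end
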